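/- Let X be a topological space, let γ = (γ_1, …, γ_N) be an iterated function system on X such that every γ_k is a closed embedding, and let S be a meager subset of X. Assume there exists a dense open subset U of X such that γ_1(U), …, γ_N(U) are all open in X. Then the smallest completely γ-invariant subset of X containing S (i.e., the intersection of all completely γ-invariant subsets of X that contain S) is meager in X. -/

import Mathlib

/-- A subset `S` of `X` is completely invariant under the iterated function system `γ`
if `γ k '' S ⊆ S` and `γ k ⁻¹' S ⊆ S` for every index `k`. -/
def CompletelyInvariant {X : Type*} {N : ℕ} (γ : Fin N → X → X) (S : Set X) : Prop :=
  ∀ k : Fin N, γ k '' S ⊆ S ∧ γ k ⁻¹' S ⊆ S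

section Aux

variable {X : Type*} [TopologicalSpace X]

/-- Image of a nowhere dense set under a closed embedding whose "generic" image is open. -/
lemma aux_image_nowhereDense {f : X → X} (hemb : Topology.IsEmbedding f)
    (hclosed : IsClosedMap f) {U : Set X} (hUdense : Dense U) (hUopen : IsOpen (f '' U))
    {T : Set X} (hT : IsNowhereDense T) : IsNowhereDense (f '' T) := by
  have hTc : IsClosed (closure T) := isClosed_closure
  have h1 : IsClosed (f '' closure T) := hclosed _ hTc
  have hsub : f '' T ⊆ f '' closure T := Set.image_mono subset_closure
  refine Set.Subset.antisymm ?_ (Set.empty_subset _)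
  intro x hx
  have hx' : x ∈ interior (f '' closure T) := by
    apply interior_mono (closure_minimal hsub h1) hx
  -- interior (f '' closure T) is a nonempty open set inside range f
  set V := interior (f '' closure T) with hV
  have hVopen : IsOpen V := isOpen_interior
  have hVsub : V ⊆ Set.range f := fun y hy => by
    rcases interior_subset hy with ⟨z, _, rfl⟩; exact ⟨z, rfl⟩
  -- range f ⊆ closure (f '' U)
  have hrange : Set.range f ⊆ closure (f '' U) := by
    rintro _ ⟨z, rfl⟩
    have : z ∈ closure U := hUdense z
    exact (Continuous.closure_preimage_subset hemb.continuous (f '' U))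
      (closure_mono (fun u hu => Set.subset_preimage_image f U hu) this)
  -- so V meets f '' U
  have hmeet : (V ∩ f '' U).Nonempty := by
    have hxcl : x ∈ closure (f '' U) := hrange (hVsub hx')
    rcases mem_closure_iff.mp hxcl V hVopen hx' with ⟨y, hyV, hyU⟩
    exact ⟨y, hyV, hyU⟩
  rcases hmeet with ⟨y, hyV, u, huU, rfl⟩
  -- f ⁻¹' (V ∩ f '' U) is nonempty, open, contained in closure T
  have hWopen : IsOpen (f ⁻¹' (V ∩ f '' U)) :=
    (hVopen.inter hUopen).preimage hemb.continuous
  have hWsub : f ⁻¹' (V ∩ f '' U) ⊆ closure T := by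
    intro z hz
    have : f z ∈ f '' closure T := interior_subset hz.1
    rcases this with ⟨w, hw, hwz⟩
    rwa [hemb.injective hwz] at hw
  have hu : u ∈ f ⁻¹' (V ∩ f '' U) := ⟨hyV, ⟨u, huU, rfl⟩⟩
  have : u ∈ interior (closure T) := by
    exact interior_maximal hWsub hWopen hu
  rw [hT] at this
  exact this.elim

lemma aux_preimage_nowhereDense {f : X → X} (hemb : Topology.IsEmbedding f)
    {U : Set X} (hUdense : Dense U) (hUopen : IsOpen U) (hfU : IsOpen (f '' U))
    {T : Set X} (hT : IsNowhereDense T) : IsNowhereDense (f ⁻¹' T) := by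
  have h1 : IsClosed (f ⁻¹' closure T) := (isClosed_closure).preimage hemb.continuous
  have hsub : f ⁻¹' T ⊆ f ⁻¹' closure T := Set.preimage_mono subset_closure
  refine Set.Subset.antisymm ?_ (Set.empty_subset _)
  intro x hx
  have hx' : x ∈ interior (f ⁻¹' closure T) :=
    interior_mono (closure_minimal hsub h1) hx
  set V := interior (f ⁻¹' closure T) with hV
  have hVopen : IsOpen V := isOpen_interior
  -- V ∩ U nonempty
  have hmeet : (V ∩ U).Nonempty := by
    rcases mem_closure_iff.mp (hUdense x) V hVopen hx' with ⟨y, hyV, hyU⟩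
    exact ⟨y, hyV, hyU⟩
  -- f '' (V ∩ U) is open: it equals O ∩ f '' U for some open O
  rcases hemb.isInducing.isOpen_iff.mp (hVopen.inter hUopen) with ⟨O, hOopen, hOpre⟩
  have himg : f '' (V ∩ U) = O ∩ f '' U := by
    apply Set.Subset.antisymm
    · rintro _ ⟨z, hz, rfl⟩
      have hz' : z ∈ f ⁻¹' O := by rw [hOpre]; exact hz
      exact ⟨hz', ⟨z, hz.2, rfl⟩⟩
    · rintro _ ⟨hO, z, hzU, rfl⟩
      have : z ∈ V ∩ U := by rw [← hOpre]; exact hO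
      exact ⟨z, this, rfl⟩
  have hopen : IsOpen (f '' (V ∩ U)) := himg ▸ hOopen.inter hfU
  have hsubT : f '' (V ∩ U) ⊆ closure T := by
    rintro _ ⟨z, hz, rfl⟩
    have hz1 : z ∈ f ⁻¹' closure T := interior_subset hz.1
    exact hz1
  rcases hmeet with ⟨y, hy⟩
  have : f y ∈ interior (closure T) :=
    interior_maximal hsubT hopen ⟨y, hy, rfl⟩
  rw [hT] at this
  exact this.elim

lemma aux_image_meagre {f : X → X} (hemb : Topology.IsEmbedding f)
    (hclosed : IsClosedMap f) {U : Set X} (hUdense : Dense U) (hUopen : IsOpen (f '' U))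
    {s : Set X} (hs : IsMeagre s) : IsMeagre (f '' s) := by
  rw [isMeagre_iff_countable_union_isNowhereDense] at hs ⊢
  rcases hs with ⟨S, hnd, hc, hsub⟩
  refine ⟨(Set.image f) '' S, ?_, hc.image _, ?_⟩
  · rintro _ ⟨t, ht, rfl⟩
    exact aux_image_nowhereDense hemb hclosed hUdense hUopen (hnd t ht)
  · intro x hx
    rcases hx with ⟨z, hz, rfl⟩
    rcases hsub hz with ⟨t, ht, hzt⟩
    exact ⟨f '' t, ⟨t, ht, rfl⟩, ⟨z, hzt, rfl⟩⟩

lemma aux_preimage_meagre {f : X → X} (hemb : Topology.IsEmbedding f)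
    {U : Set X} (hUdense : Dense U) (hUopen : IsOpen U) (hfU : IsOpen (f '' U))
    {s : Set X} (hs : IsMeagre s) : IsMeagre (f ⁻¹' s) := by
  rw [isMeagre_iff_countable_union_isNowhereDense] at hs ⊢
  rcases hs with ⟨S, hnd, hc, hsub⟩
  refine ⟨(Set.preimage f) '' S, ?_, hc.image _, ?_⟩
  · rintro _ ⟨t, ht, rfl⟩
    exact aux_preimage_nowhereDense hemb hUdense hUopen hfU (hnd t ht)
  · intro x hx
    rcases hsub hx with ⟨t, ht, hxt⟩
    exact ⟨f ⁻¹' t, ⟨t, ht, rfl⟩, hxt⟩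

lemma aux_meagre_union {s t : Set X} (hs : IsMeagre s) (ht : IsMeagre t) :
    IsMeagre (s ∪ t) := by
  rw [IsMeagre, Set.compl_union]
  exact Filter.inter_mem hs ht

lemma aux_meagre_iUnion_fin {N : ℕ} {s : Fin N → Set X} (hs : ∀ k, IsMeagre (s k)) :
    IsMeagre (⋃ k, s k) := by
  rw [IsMeagre, Set.compl_iUnion]
  exact (Filter.iInter_mem).mpr hs

end Aux

/-- If all members of the iterated function system `γ` are closed embeddings, there is a
dense open set `U` whose images `γ k '' U` are all open, and `S` is meager, then the smallest
completely `γ`-invariant set containing `S` is meager. -/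
theorem isMeagre_completelyInvariant_closure {X : Type*} [TopologicalSpace X] {N : ℕ}
    (γ : Fin N → X → X)
    (hemb : ∀ k, Topology.IsEmbedding (γ k)) (hclosed : ∀ k, IsClosedMap (γ k))
    (S : Set X) (hS : IsMeagre S)
    (U : Set X) (hUopen : IsOpen U) (hUdense : Dense U)
    (himg : ∀ k, IsOpen (γ k '' U)) :
    IsMeagre (⋂₀ {T : Set X | CompletelyInvariant γ T ∧ S ⊆ T}) := by
  set F : Set X → Set X := fun A => (A ∪ ⋃ k, γ k '' A) ∪ ⋃ k, γ k ⁻¹' A with hF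
  set M : ℕ → Set X := fun n => F^[n] S with hM
  have hstep : ∀ n, M (n + 1) = F (M n) := fun n => Function.iterate_succ_apply' F n S
  have hsubF : ∀ A : Set X, A ⊆ F A := fun A => (Set.subset_union_left).trans Set.subset_union_left
  have hmeagre : ∀ n, IsMeagre (M n) := by
    intro n
    induction n with
    | zero => exact hS
    | succ n ih =>
      rw [hstep n]
      refine aux_meagre_union (aux_meagre_union ih ?_) ?_
      · exact aux_meagre_iUnion_fin fun k =>
          aux_image_meagre (hemb k) (hclosed k) hUdense (himg k) ih
      · exact aux_meagre_iUnion_fin fun k =>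
          aux_preimage_meagre (hemb k) hUdense hUopen (himg k) ih
  have hMmeagre : IsMeagre (⋃ n, M n) := isMeagre_iUnion hmeagre
  have hinv : CompletelyInvariant γ (⋃ n, M n) := by
    intro k
    constructor
    · rintro _ ⟨x, hx, rfl⟩
      rcases Set.mem_iUnion.mp hx with ⟨n, hn⟩
      refine Set.mem_iUnion.mpr ⟨n + 1, ?_⟩
      rw [hstep n]
      exact Or.inl (Or.inr (Set.mem_iUnion.mpr ⟨k, ⟨x, hn, rfl⟩⟩))
    · intro x hx
      rcases Set.mem_iUnion.mp hx with ⟨n, hn⟩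
      refine Set.mem_iUnion.mpr ⟨n + 1, ?_⟩
      rw [hstep n]
      exact Or.inr (Set.mem_iUnion.mpr ⟨k, hn⟩)
  have hSsub : S ⊆ ⋃ n, M n := Set.subset_iUnion M 0
  exact hMmeagre.mono (Set.sInter_subset_of_mem ⟨hinv, hSsub⟩)
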